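/- arXiv:2008.09429 — 2 statements merged into one kernel-verified Lean document; each statement's English description precedes it below -/
import Mathlib

section
/- Let L, U, Y : [0,T] → ℝ be càdlàg, let μ_δ and μ_α be finite Borel measures on (0,T], and let l, u : (0,T] → ℝ be Borel measurable such that l is μ_δ-essentially bounded above and −u is μ_α-essentially bounded above. Then the following are equivalent: (i) L(t) ≤ Y(t) ≤ U(t) for every t ∈ [0,T), l(t) ≤ Y(t−) for μ_δ-almost every t ∈ (0,T], and Y(t−) ≤ u(t) for μ_α-almost every t ∈ (0,T]; (ii) for every t ∈ (0,T], max(L(t−), l^{*,μ_δ}(t)) ≤ Y(t−) ≤ min(U(t−), −(−u)^{*,μ_α}(t)), where the max and min are taken in ℝ ∪ {±∞}. -/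
open MeasureTheory Filter Topology Set

/-- `gnProc ν φ n t` is the process
`φ^{n,ν}(t) = -n·t + inf{α ∈ ℝ : ∫_{(0,t]} (φ(s) + n·s - α)⁺ dν(s) = 0}`,
with values in `EReal` (it equals `⊥` exactly when `ν((0,t]) = 0`). -/
noncomputable def gnProc (ν : Measure ℝ) (φ : ℝ → ℝ) (n : ℕ) (t : ℝ) : EReal :=
  ((-((n : ℝ) * t) : ℝ) : EReal) +
    sInf ((fun a : ℝ => (a : EReal)) ''
      {a : ℝ | ∫⁻ s in Set.Ioc (0 : ℝ) t, ENNReal.ofReal (φ s + (n : ℝ) * s - a) ∂ν = 0})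

/-- `gStar ν φ t = inf_{n ∈ ℕ} φ^{n,ν}(t)`. -/
noncomputable def gStar (ν : Measure ℝ) (φ : ℝ → ℝ) (t : ℝ) : EReal :=
  ⨅ n : ℕ, gnProc ν φ n t

lemma lemUB (ν : Measure ℝ) (f : ℝ → ℝ) (n : ℕ) (t c : ℝ)
    (h : ∀ᵐ s ∂ν, s ∈ Set.Ioc (0:ℝ) t → f s + n * s ≤ c + n * t) :
    gnProc ν f n t ≤ (c : EReal) := by
  have hmem : (c + n * t) ∈
      {a : ℝ | ∫⁻ s in Set.Ioc (0 : ℝ) t, ENNReal.ofReal (f s + (n : ℝ) * s - a) ∂ν = 0} := by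
    have h0 : (fun s => ENNReal.ofReal (f s + (n:ℝ) * s - (c + n * t)))
        =ᵐ[ν.restrict (Set.Ioc (0:ℝ) t)] 0 := by
      rw [EventuallyEq, ae_restrict_iff' measurableSet_Ioc]
      filter_upwards [h] with s hs hmem
      have := hs hmem
      simp only [Pi.zero_apply, ENNReal.ofReal_eq_zero]
      linarith
    show ∫⁻ s in Set.Ioc (0:ℝ) t, ENNReal.ofReal (f s + (n:ℝ) * s - (c + n * t)) ∂ν = 0
    rw [lintegral_congr_ae h0]; simp
  have h1 : sInf ((fun a : ℝ => (a : EReal)) ''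
      {a : ℝ | ∫⁻ s in Set.Ioc (0 : ℝ) t, ENNReal.ofReal (f s + (n : ℝ) * s - a) ∂ν = 0})
      ≤ ((c + n * t : ℝ) : EReal) := sInf_le (mem_image_of_mem _ hmem)
  calc gnProc ν f n t ≤ ((-((n : ℝ) * t) : ℝ) : EReal) + ((c + n * t : ℝ) : EReal) :=
        add_le_add_right h1 _
    _ = (c : EReal) := by rw [← EReal.coe_add]; norm_cast; ring

lemma lemB (ν : Measure ℝ) (T t : ℝ) (ht : t ∈ Set.Ioc (0:ℝ) T) (f Z : ℝ → ℝ) (α : ℝ)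
    (hbα : ∀ᵐ s ∂ν, s ∈ Set.Ioc (0:ℝ) T → f s ≤ α)
    (hfZ : ∀ᵐ s ∂ν, s ∈ Set.Ioc (0:ℝ) T → f s ≤ Z s)
    (hZ : ∀ ε > (0:ℝ), ∃ δ > (0:ℝ), ∀ s, t - δ < s → s ≤ t → Z s ≤ Z t + ε) :
    gStar ν f t ≤ ((Z t : ℝ) : EReal) := by
  by_contra hcon
  push_neg at hcon
  obtain ⟨c, hc1, hc2⟩ := EReal.exists_between_coe_real hcon
  have hε : (0:ℝ) < c - Z t := by
    have := EReal.coe_lt_coe_iff.mp hc1; linarith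
  obtain ⟨δ, hδ, hδs⟩ := hZ (c - Z t) hε
  obtain ⟨n, hn⟩ := exists_nat_ge ((α - c) / δ)
  have hnδ : α - n * δ ≤ c := by
    have : α - c ≤ n * δ := by
      rw [div_le_iff₀ hδ] at hn; linarith
    linarith
  have hub : gnProc ν f n t ≤ (c : EReal) := by
    apply lemUB
    filter_upwards [hbα, hfZ] with s hsα hsZ hs
    have hsT : s ∈ Set.Ioc (0:ℝ) T := ⟨hs.1, le_trans hs.2 ht.2⟩
    rcases le_or_gt s (t - δ) with hcase | hcase
    · have := hsα hsT
      have hns : (n:ℝ) * s ≤ n * (t - δ) := by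
        apply mul_le_mul_of_nonneg_left hcase (by positivity)
      nlinarith
    · have h1 : f s ≤ Z s := hsZ hsT
      have h2 : Z s ≤ Z t + (c - Z t) := hδs s hcase hs.2
      have hns : (n:ℝ) * s ≤ n * t := by
        apply mul_le_mul_of_nonneg_left hs.2 (by positivity)
      linarith
  have : gStar ν f t ≤ (c : EReal) := le_trans (iInf_le _ n) hub
  exact absurd (lt_of_le_of_lt this hc2) (lt_irrefl _)

lemma lemLL (T : ℝ) (Y Ym : ℝ → ℝ)
    (hYl : ∀ t ∈ Set.Ioc (0:ℝ) T, Tendsto Y (𝓝[<] t) (𝓝 (Ym t)))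
    (t : ℝ) (ht : t ∈ Set.Ioc (0:ℝ) T) (ε : ℝ) (hε : 0 < ε) :
    ∃ δ > (0:ℝ), ∀ s, t - δ < s → s ≤ t → |Ym s - Ym t| ≤ ε := by
  have hev : ∀ᶠ s' in 𝓝[<] t, |Y s' - Ym t| < ε := by
    have := hYl t ht
    have : Tendsto (fun s' => Y s' - Ym t) (𝓝[<] t) (𝓝 0) := by
      simpa using this.sub (tendsto_const_nhds (x := Ym t))
    have := this.eventually (eventually_abs_sub_lt 0 hε)
    simpa using this
  obtain ⟨a, ha, hsub⟩ := mem_nhdsLT_iff_exists_Ioo_subset.mp hev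
  refine ⟨min (t - a) t, lt_min (by simp [sub_pos]; exact ha) ht.1, fun s hs1 hs2 => ?_⟩
  have hsa : a < s := by
    have : t - min (t - a) t ≥ t - (t - a) := by
      have := min_le_left (t - a) t; linarith
    linarith
  have hs0 : 0 < s := by
    have : t - min (t - a) t ≥ t - t := by
      have := min_le_right (t - a) t; linarith
    linarith
  rcases eq_or_lt_of_le hs2 with rfl | hst
  · simp [abs_nonneg, le_of_lt hε]
  · -- s < t, use left limit at s
    have hsT : s ∈ Set.Ioc (0:ℝ) T := ⟨hs0, le_trans (le_of_lt hst) ht.2⟩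
    have hlim := hYl s hsT
    have hev2 : ∀ᶠ s' in 𝓝[<] s, |Y s' - Ym t| ≤ ε := by
      have hmem : Set.Ioo a s ∈ 𝓝[<] s := Ioo_mem_nhdsLT hsa
      filter_upwards [hmem] with s' hs'
      exact le_of_lt (hsub ⟨hs'.1, lt_trans hs'.2 hst⟩)
    have : Tendsto (fun s' => |Y s' - Ym t|) (𝓝[<] s) (𝓝 (|Ym s - Ym t|)) :=
      ((hlim.sub tendsto_const_nhds).abs)
    exact le_of_tendsto this hev2

lemma lemC (ν : Measure ℝ) (T : ℝ) (hsupp : ν (Set.Ioc (0:ℝ) T)ᶜ = 0)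
    (f : ℝ → ℝ) (hf : Measurable f) (n : ℕ) :
    ∀ᵐ t ∂ν, t ∈ Set.Ioc (0:ℝ) T → ((f t : ℝ) : EReal) ≤ gnProc ν f n t := by
  set g : ℝ → ℝ := fun s => f s + n * s with hg_def
  have hg : Measurable g := hf.add (measurable_const.mul measurable_id)
  set B : ℚ → Set ℝ := fun q =>
    {t | t ∈ Set.Ioc (0:ℝ) T ∧ (q:ℝ) < g t ∧
      ∫⁻ s in Set.Ioc (0:ℝ) t, ENNReal.ofReal (g s - q) ∂ν = 0} with hB_def
  -- key: for t with zero integral, the "exceed" set up to t is null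
  have key : ∀ (q : ℚ) (t : ℝ),
      (∫⁻ s in Set.Ioc (0:ℝ) t, ENNReal.ofReal (g s - q) ∂ν = 0) →
      ν {s | s ∈ Set.Ioc (0:ℝ) t ∧ (q:ℝ) < g s} = 0 := by
    intro q t hint
    have hmeas : Measurable fun s => ENNReal.ofReal (g s - (q:ℝ)) :=
      (hg.sub measurable_const).ennreal_ofReal
    have h0 := (lintegral_eq_zero_iff hmeas).mp hint
    rw [EventuallyEq, ae_restrict_iff' measurableSet_Ioc] at h0
    rw [ae_iff] at h0
    apply measure_mono_null _ h0
    intro s hs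
    simp only [Set.mem_setOf_eq, Pi.zero_apply, ENNReal.ofReal_eq_zero, not_forall, not_le]
    exact ⟨hs.1, by linarith [hs.2]⟩
  have hBnull : ∀ q : ℚ, ν (B q) = 0 := by
    intro q
    by_cases hne : (B q).Nonempty
    · have hsub : B q ⊆ Set.Ioc (0:ℝ) T := fun t ht => ht.1
      have hbdd : BddAbove (B q) := BddAbove.mono hsub bddAbove_Ioc
      set c := sSup (B q) with hc_def
      choose tk htk1 htk2 using fun k : ℕ =>
        exists_lt_of_lt_csSup hne (show c - 1/(k+1) < c by
          have : (0:ℝ) < 1/(k+1) := by positivity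
          linarith)
      have hcover : B q ⊆ (⋃ k : ℕ, {s | s ∈ Set.Ioc (0:ℝ) (tk k) ∧ (q:ℝ) < g s})
          ∪ (B q ∩ {c}) := by
        intro t ht
        rcases eq_or_ne t c with rfl | hne2
        · exact Or.inr ⟨ht, rfl⟩
        · left
          have htc : t < c := lt_of_le_of_ne (le_csSup hbdd ht) hne2
          obtain ⟨k, hk⟩ := exists_nat_one_div_lt (show (0:ℝ) < c - t by linarith)
          refine Set.mem_iUnion.mpr ⟨k, ⟨(ht.1).1, ?_⟩, ht.2.1⟩
          have : t < c - 1/(k+1) := by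
            push_cast at hk ⊢; linarith
          linarith [htk2 k]
      apply measure_mono_null hcover
      apply measure_union_null
      · exact measure_iUnion_null fun k => key q (tk k) (htk1 k).2.2
      · by_cases hc : c ∈ B q
        · apply measure_mono_null _ (key q c hc.2.2)
          rintro s ⟨hs1, rfl⟩
          exact ⟨⟨hc.1.1, le_refl _⟩, hc.2.1⟩
        · apply measure_mono_null _ (measure_empty (μ := ν))
          rintro s ⟨hs1, rfl⟩
          exact absurd hs1 hc
    · rw [Set.not_nonempty_iff_eq_empty] at hne
      simp [hne]
  have hUnull : ν (⋃ q : ℚ, B q) = 0 := measure_iUnion_null hBnull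
  rw [ae_iff]
  apply measure_mono_null _ (measure_union_null hUnull hsupp)
  intro t ht
  simp only [Set.mem_setOf_eq, not_forall] at ht
  obtain ⟨htT, hlt⟩ := ht
  by_cases htU : t ∈ ⋃ q : ℚ, B q
  · exact Or.inl htU
  · exfalso
    apply hlt
    have hq : ∀ q : ℚ, (q:ℝ) < g t →
        ∫⁻ s in Set.Ioc (0:ℝ) t, ENNReal.ofReal (g s - q) ∂ν ≠ 0 := by
      intro q hq hint
      exact htU (Set.mem_iUnion.mpr ⟨q, htT, hq, hint⟩)
    have hled : ((g t : ℝ) : EReal) ≤ sInf ((fun a : ℝ => (a : EReal)) ''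
        {a : ℝ | ∫⁻ s in Set.Ioc (0 : ℝ) t, ENNReal.ofReal (f s + (n : ℝ) * s - a) ∂ν = 0}) := by
      apply le_sInf
      rintro b ⟨a, ha, rfl⟩
      rw [EReal.coe_le_coe_iff]
      by_contra hcon
      push_neg at hcon
      obtain ⟨q, hq1, hq2⟩ := exists_rat_btwn hcon
      apply hq q hq2
      refine le_antisymm (le_trans (lintegral_mono fun s => ?_) (le_of_eq ha)) zero_le
      exact ENNReal.ofReal_le_ofReal (by simp only [hg_def]; linarith)
    calc ((f t : ℝ) : EReal) = ((-((n : ℝ) * t) : ℝ) : EReal) + ((g t : ℝ) : EReal) := by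
          rw [← EReal.coe_add]; congr 1; simp only [hg_def]; ring
      _ ≤ gnProc ν f n t := add_le_add_right hled _

lemma ereal_le_neg_swap {x y : EReal} (h : y ≤ -x) : x ≤ -y := by
  have h2 : -(-x) ≤ -y := EReal.neg_le.mpr (by rwa [neg_neg])
  rwa [neg_neg] at h2

lemma lemLeftLe (T t : ℝ) (ht : t ∈ Set.Ioc (0:ℝ) T) (A B Am Bm : ℝ → ℝ)
    (hAl : Tendsto A (𝓝[<] t) (𝓝 (Am t))) (hBl : Tendsto B (𝓝[<] t) (𝓝 (Bm t)))
    (hle : ∀ s ∈ Set.Ico (0:ℝ) T, A s ≤ B s) : Am t ≤ Bm t := by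
  refine le_of_tendsto_of_tendsto hAl hBl ?_
  filter_upwards [Ioo_mem_nhdsLT ht.1] with s hs
  exact hle s ⟨le_of_lt hs.1, lt_of_lt_of_le hs.2 ht.2⟩

lemma lemRight (T t : ℝ) (ht : t ∈ Set.Ico (0:ℝ) T) (A B Am Bm : ℝ → ℝ)
    (hA : ContinuousWithinAt A (Set.Ici t) t) (hB : ContinuousWithinAt B (Set.Ici t) t)
    (hAl : ∀ s ∈ Set.Ioc (0:ℝ) T, Tendsto A (𝓝[<] s) (𝓝 (Am s)))
    (hBl : ∀ s ∈ Set.Ioc (0:ℝ) T, Tendsto B (𝓝[<] s) (𝓝 (Bm s)))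
    (hle : ∀ s ∈ Set.Ioc (0:ℝ) T, Am s ≤ Bm s) : A t ≤ B t := by
  apply le_of_forall_pos_le_add
  intro ε hε
  have hevA : {s : ℝ | |A s - A t| < ε/2} ∈ 𝓝[Set.Ici t] t :=
    hA.eventually (eventually_abs_sub_lt (A t) (half_pos hε))
  have hevB : {s : ℝ | |B s - B t| < ε/2} ∈ 𝓝[Set.Ici t] t :=
    hB.eventually (eventually_abs_sub_lt (B t) (half_pos hε))
  obtain ⟨δA, hδA, hsubA⟩ := Metric.mem_nhdsWithin_iff.mp hevA
  obtain ⟨δB, hδB, hsubB⟩ := Metric.mem_nhdsWithin_iff.mp hevB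
  set δ := min δA δB with hδ_def
  have hδpos : 0 < δ := lt_min hδA hδB
  set t' := min (t + δ/2) ((t+T)/2) with ht'_def
  have htt' : t < t' := by
    apply lt_min (by linarith)
    have := ht.2; linarith
  have ht'T : t' ∈ Set.Ioc (0:ℝ) T := by
    constructor
    · exact lt_of_le_of_lt ht.1 htt'
    · have h1 : t' ≤ (t+T)/2 := min_le_right _ _
      have := ht.2; linarith
  have hIoo : ∀ s ∈ Set.Ioo t t', s ∈ Metric.ball t δ ∩ Set.Ici t := by
    intro s hs
    have h1 : t' ≤ t + δ/2 := min_le_left _ _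
    constructor
    · rw [Metric.mem_ball, Real.dist_eq, abs_of_nonneg (by linarith [hs.1])]
      linarith [hs.2]
    · exact le_of_lt hs.1
  have hAm : A t - ε/2 ≤ Am t' := by
    refine ge_of_tendsto (hAl t' ht'T) ?_
    filter_upwards [Ioo_mem_nhdsLT htt'] with s hs
    have hmem := hIoo s hs
    have := hsubA ⟨Metric.ball_subset_ball (min_le_left _ _) hmem.1, hmem.2⟩
    simp only [Set.mem_setOf_eq, abs_sub_lt_iff] at this
    linarith [this.2]
  have hBm : Bm t' ≤ B t + ε/2 := by
    refine le_of_tendsto (hBl t' ht'T) ?_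
    filter_upwards [Ioo_mem_nhdsLT htt'] with s hs
    have hmem := hIoo s hs
    have := hsubB ⟨Metric.ball_subset_ball (min_le_right _ _) hmem.1, hmem.2⟩
    simp only [Set.mem_setOf_eq, abs_sub_lt_iff] at this
    linarith [this.1]
  have := hle t' ht'T
  linarith

/-- Let `L, U, Y : [0,T] → ℝ` be càdlàg (with left limits `Lm, Um, Ym`), `μδ, μα` finite
Borel measures on `(0,T]`, and `l, u : (0,T] → ℝ` Borel measurable, `l` μδ-essentially
bounded above and `−u` μα-essentially bounded above. Then: (`L ≤ Y ≤ U` on `[0,T)`,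
`l(t) ≤ Y(t−)` μδ-a.e. and `Y(t−) ≤ u(t)` μα-a.e. on `(0,T]`) if and only if for every
`t ∈ (0,T]`, `max(L(t−), l^{*,μδ}(t)) ≤ Y(t−) ≤ min(U(t−), −(−u)^{*,μα}(t))`, the max and
min taken in `ℝ ∪ {±∞}`. -/
theorem stmt_14 (T : ℝ) (hT : 0 < T)
    (μδ μα : Measure ℝ) [IsFiniteMeasure μδ] [IsFiniteMeasure μα]
    (hsuppδ : μδ (Set.Ioc (0 : ℝ) T)ᶜ = 0) (hsuppα : μα (Set.Ioc (0 : ℝ) T)ᶜ = 0)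
    (l u : ℝ → ℝ) (hl : Measurable l) (hu : Measurable u)
    (αl : ℝ) (hbl : ∀ᵐ s ∂μδ, s ∈ Set.Ioc (0 : ℝ) T → l s ≤ αl)
    (αu : ℝ) (hbu : ∀ᵐ s ∂μα, s ∈ Set.Ioc (0 : ℝ) T → -u s ≤ αu)
    (L U Y Lm Um Ym : ℝ → ℝ)
    (hLr : ∀ t ∈ Set.Ico (0 : ℝ) T, ContinuousWithinAt L (Set.Ici t) t)
    (hUr : ∀ t ∈ Set.Ico (0 : ℝ) T, ContinuousWithinAt U (Set.Ici t) t)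
    (hYr : ∀ t ∈ Set.Ico (0 : ℝ) T, ContinuousWithinAt Y (Set.Ici t) t)
    (hLl : ∀ t ∈ Set.Ioc (0 : ℝ) T, Tendsto L (𝓝[<] t) (𝓝 (Lm t)))
    (hUl : ∀ t ∈ Set.Ioc (0 : ℝ) T, Tendsto U (𝓝[<] t) (𝓝 (Um t)))
    (hYl : ∀ t ∈ Set.Ioc (0 : ℝ) T, Tendsto Y (𝓝[<] t) (𝓝 (Ym t))) :
    ((∀ t ∈ Set.Ico (0 : ℝ) T, L t ≤ Y t ∧ Y t ≤ U t) ∧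
     (∀ᵐ t ∂μδ, t ∈ Set.Ioc (0 : ℝ) T → l t ≤ Ym t) ∧
     (∀ᵐ t ∂μα, t ∈ Set.Ioc (0 : ℝ) T → Ym t ≤ u t)) ↔
    (∀ t ∈ Set.Ioc (0 : ℝ) T,
      max ((Lm t : ℝ) : EReal) (gStar μδ l t) ≤ ((Ym t : ℝ) : EReal) ∧
      ((Ym t : ℝ) : EReal) ≤ min ((Um t : ℝ) : EReal) (-(gStar μα (fun s => -u s) t))) := by
  constructor
  · rintro ⟨hcomp, hlae, huae⟩ t ht
    have hLY : Lm t ≤ Ym t :=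
      lemLeftLe T t ht L Y Lm Ym (hLl t ht) (hYl t ht) fun s hs => (hcomp s hs).1
    have hYU : Ym t ≤ Um t :=
      lemLeftLe T t ht Y U Ym Um (hYl t ht) (hUl t ht) fun s hs => (hcomp s hs).2
    have hgl : gStar μδ l t ≤ ((Ym t : ℝ) : EReal) := by
      refine lemB μδ T t ht l Ym αl hbl hlae ?_
      intro ε hε
      obtain ⟨δ, hδ, hδs⟩ := lemLL T Y Ym hYl t ht ε hε
      exact ⟨δ, hδ, fun s h1 h2 => by
        have := hδs s h1 h2
        have := abs_le.mp this
        linarith [this.1]⟩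
    have hgu : gStar μα (fun s => -u s) t ≤ ((-Ym t : ℝ) : EReal) := by
      refine lemB μα T t ht (fun s => -u s) (fun s => -Ym s) αu hbu ?_ ?_
      · filter_upwards [huae] with s hs hmem
        simp only [neg_le_neg_iff]
        exact hs hmem
      · intro ε hε
        obtain ⟨δ, hδ, hδs⟩ := lemLL T Y Ym hYl t ht ε hε
        exact ⟨δ, hδ, fun s h1 h2 => by
          have := abs_le.mp (hδs s h1 h2)
          linarith [this.2]⟩
    constructor
    · exact max_le (EReal.coe_le_coe_iff.mpr hLY) hgl
    · refine le_min (EReal.coe_le_coe_iff.mpr hYU) ?_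
      apply ereal_le_neg_swap
      rwa [← EReal.coe_neg]
  · intro h
    refine ⟨fun t ht => ⟨?_, ?_⟩, ?_, ?_⟩
    · exact lemRight T t ht L Y Lm Ym (hLr t ht) (hYr t ht) hLl hYl fun s hs =>
        EReal.coe_le_coe_iff.mp (le_trans (le_max_left _ _) (h s hs).1)
    · exact lemRight T t ht Y U Ym Um (hYr t ht) (hUr t ht) hYl hUl fun s hs =>
        EReal.coe_le_coe_iff.mp (le_trans (h s hs).2 (min_le_left _ _))
    · have hall : ∀ᵐ t ∂μδ, ∀ n : ℕ, t ∈ Set.Ioc (0:ℝ) T → ((l t : ℝ) : EReal) ≤ gnProc μδ l n t :=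
        ae_all_iff.mpr fun n => lemC μδ T hsuppδ l hl n
      filter_upwards [hall] with t h1 h2
      have hstar : ((l t : ℝ) : EReal) ≤ gStar μδ l t := le_iInf fun n => h1 n h2
      have := le_trans hstar (le_trans (le_max_right _ _) (h t h2).1)
      exact EReal.coe_le_coe_iff.mp this
    · have hall : ∀ᵐ t ∂μα, ∀ n : ℕ, t ∈ Set.Ioc (0:ℝ) T →
          (((fun s => -u s) t : ℝ) : EReal) ≤ gnProc μα (fun s => -u s) n t :=
        ae_all_iff.mpr fun n => lemC μα T hsuppα (fun s => -u s) hu.neg n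
      filter_upwards [hall] with t h1 h2
      have hstar : ((-u t : ℝ) : EReal) ≤ gStar μα (fun s => -u s) t := le_iInf fun n => h1 n h2
      have h3 : ((Ym t : ℝ) : EReal) ≤ -(gStar μα (fun s => -u s) t) :=
        le_trans (h t h2).2 (min_le_right _ _)
      have h4 : gStar μα (fun s => -u s) t ≤ ((-Ym t : ℝ) : EReal) := by
        rw [EReal.coe_neg]
        exact ereal_le_neg_swap h3
      have := EReal.coe_le_coe_iff.mp (le_trans hstar h4)
      linarith
end

section
/- Let L, Y : [0,T] → ℝ be càdlàg with L(t) ≤ Y(t) for all t ∈ [0,T), let μ and κ be finite Borel measures on (0,T], and let l : (0,T] → ℝ be Borel measurable with l(t) ≤ Y(t−) for μ-almost every t ∈ (0,T] (so that l is μ-essentially bounded above). Then the following are equivalent: (a) for every càdlàg L* : [0,T] → ℝ satisfying L(t) ≤ L*(t) ≤ Y(t) for all t ∈ [0,T) and l(t) ≤ L*(t−) for μ-almost every t ∈ (0,T], one has ∫_{(0,T]} (Y(t−) − L*(t−)) dκ(t) = 0; (b) ∫_{(0,T]} (Y(t−) − max(L(t−), l^{*,μ}(t))) dκ(t) = 0,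 where the integrand in (b) is nonnegative, the max being taken in ℝ ∪ {−∞}. -/
open MeasureTheory Filter Topology Set

/-- The canonical map `EReal → ℝ≥0∞`, sending negatives to `0` and `⊤` to `⊤`. -/
noncomputable def erealToENNReal (x : EReal) : ENNReal :=
  if x = ⊤ then ⊤ else ENNReal.ofReal x.toReal

lemma erealToENNReal_eq_zero {x : EReal} : erealToENNReal x = 0 ↔ x ≤ 0 := by
  unfold erealToENNReal
  induction x using EReal.rec with
  | bot => simp
  | coe x =>
    simp only [if_neg (by simp : (x : EReal) ≠ ⊤), ENNReal.ofReal_eq_zero]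
    rw [EReal.toReal_coe]
    exact ⟨fun h => by exact_mod_cast h, fun h => by exact_mod_cast h⟩
  | top => simp

lemma erealToENNReal_mono {x y : EReal} (h : x ≤ y) : erealToENNReal x ≤ erealToENNReal y := by
  unfold erealToENNReal
  induction y using EReal.rec with
  | bot =>
    have : x = ⊥ := le_bot_iff.mp h
    simp [this]
  | coe y =>
    induction x using EReal.rec with
    | bot => simp
    | coe x =>
      simp only [if_neg (by simp : (x : EReal) ≠ ⊤), if_neg (by simp : (y : EReal) ≠ ⊤)]
      rw [EReal.toReal_coe, EReal.toReal_coe]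
      exact ENNReal.ofReal_le_ofReal (EReal.coe_le_coe_iff.mp h)
    | top => exact absurd h (by simp)
  | top => simp

lemma erealToENNReal_coe {r : ℝ} : erealToENNReal (r : EReal) = ENNReal.ofReal r := by
  unfold erealToENNReal
  simp

def Aset (μ : Measure ℝ) (l : ℝ → ℝ) (n : ℕ) (t : ℝ) : Set ℝ :=
  {a : ℝ | ∫⁻ s in Set.Ioc (0 : ℝ) t, ENNReal.ofReal (l s + (n : ℝ) * s - a) ∂μ = 0}

noncomputable def FnE (μ : Measure ℝ) (l : ℝ → ℝ) (n : ℕ) (t : ℝ) : EReal :=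
  sInf ((fun a : ℝ => (a : EReal)) '' Aset μ l n t)

lemma gnProc_eq (μ : Measure ℝ) (l : ℝ → ℝ) (n : ℕ) (t : ℝ) :
    gnProc μ l n t = ((-((n : ℝ) * t) : ℝ) : EReal) + FnE μ l n t := rfl

lemma mem_Aset_iff {μ : Measure ℝ} {l : ℝ → ℝ} (hl : Measurable l) {n : ℕ} {t a : ℝ} :
    a ∈ Aset μ l n t ↔ ∀ᵐ s ∂μ.restrict (Set.Ioc (0:ℝ) t), l s + (n:ℝ) * s ≤ a := by
  unfold Aset
  rw [Set.mem_setOf_eq, lintegral_eq_zero_iff]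
  · constructor
    · intro h
      filter_upwards [h] with s hs
      have := ENNReal.ofReal_eq_zero.mp hs
      linarith
    · intro h
      filter_upwards [h] with s hs
      exact ENNReal.ofReal_eq_zero.mpr (by linarith)
  · exact ((hl.add ((measurable_id.const_mul _))).sub measurable_const).ennreal_ofReal

lemma Aset_upward {μ : Measure ℝ} {l : ℝ → ℝ} {n : ℕ} {t a b : ℝ}
    (hab : a ≤ b) (ha : a ∈ Aset μ l n t) : b ∈ Aset μ l n t := by
  unfold Aset at *
  refine le_antisymm (le_trans (lintegral_mono fun s => ?_) ha.le) (by simp)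
  exact ENNReal.ofReal_le_ofReal (by linarith)

lemma FnE_mono {μ : Measure ℝ} {l : ℝ → ℝ} {n : ℕ} : Monotone (FnE μ l n) := by
  intro s t hst
  apply sInf_le_sInf
  apply Set.image_mono
  intro a ha
  unfold Aset at *
  exact le_antisymm (le_trans (lintegral_mono_set (Set.Ioc_subset_Ioc_right hst)) ha.le)
    (by simp)

lemma EReal.le_coe_of_forall_add {x : EReal} {y : ℝ}
    (h : ∀ ε : ℝ, 0 < ε → x ≤ ((y + ε : ℝ) : EReal)) : x ≤ (y : EReal) := by
  induction x using EReal.rec with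
  | bot => exact bot_le
  | coe x =>
    exact EReal.coe_le_coe_iff.mpr (le_of_forall_pos_le_add fun ε hε =>
      EReal.coe_le_coe_iff.mp (h ε hε))
  | top => exact absurd (top_le_iff.mp (h 1 one_pos)) (EReal.coe_ne_top _)

lemma measurable_comp_countable_range {α β γ : Type*} [MeasurableSpace α] [MeasurableSpace β]
    [MeasurableSpace γ] [MeasurableSingletonClass β] {f : α → β}
    (hf : Measurable f) (hS : (Set.range f).Countable) (h : β → γ) :
    Measurable (h ∘ f) := by
  intro A hA
  have : (h ∘ f) ⁻¹' A = f ⁻¹' (h ⁻¹' A ∩ Set.range f) := by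
    ext x; simp [Set.mem_preimage, Set.mem_range]
  rw [this]
  exact hf ((hS.mono (Set.inter_subset_right)).measurableSet)


lemma bddAbove_cadlag {T : ℝ} (hT : 0 < T) (f fm : ℝ → ℝ)
    (hr : ∀ t ∈ Set.Ico (0:ℝ) T, ContinuousWithinAt f (Set.Ici t) t)
    (hlm : ∀ t ∈ Set.Ioc (0:ℝ) T, Tendsto f (𝓝[<] t) (𝓝 (fm t))) :
    ∃ M : ℝ, (∀ t ∈ Set.Ico (0:ℝ) T, f t ≤ M) ∧ (∀ t ∈ Set.Ioc (0:ℝ) T, fm t ≤ M) := by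
  suffices h : ∃ M : ℝ, ∀ t ∈ Set.Ico (0:ℝ) T, f t ≤ M by
    obtain ⟨M, hM⟩ := h
    refine ⟨M, hM, fun t ht => ?_⟩
    refine le_of_tendsto (hlm t ht) ?_
    have hmem : Set.Ioo (0:ℝ) t ∈ 𝓝[<] t := Ioo_mem_nhdsLT_of_mem ⟨ht.1, le_refl t⟩
    filter_upwards [hmem] with s hs
    exact hM s ⟨hs.1.le, lt_of_lt_of_le hs.2 ht.2⟩
  have claim : ∀ x ∈ Set.Icc (0:ℝ) T, ∃ (M : ℝ) (U : Set ℝ), U ∈ 𝓝 x ∧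
      ∀ s ∈ U ∩ Set.Ico (0:ℝ) T, f s ≤ M := by
    intro x hx
    -- right side
    have hV1 : ∃ V1 ∈ 𝓝 x, ∀ s ∈ V1, x ≤ s → s ∈ Set.Ico (0:ℝ) T → f s ≤ f x + 1 := by
      by_cases hxT : x < T
      · have h1 := hr x ⟨hx.1, hxT⟩
        have h2 : ∀ᶠ s in 𝓝[Set.Ici x] x, f s < f x + 1 :=
          h1.eventually (Filter.Tendsto.eventually_lt_const (by linarith) tendsto_id)
        rw [eventually_nhdsWithin_iff] at h2
        obtain ⟨V1, hV1n, hV1⟩ := h2.exists_mem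
        exact ⟨V1, hV1n, fun s hs hxs _ => (hV1 s hs hxs).le⟩
      · refine ⟨Set.univ, univ_mem, fun s _ hxs hs => absurd (lt_of_lt_of_le hs.2 ?_) (not_lt.mpr hxs)⟩
        exact not_lt.mp hxT |>.trans (le_refl x) |>.trans (le_refl x)
    obtain ⟨V1, hV1n, hV1⟩ := hV1
    have hV2 : ∃ V2 ∈ 𝓝 x, ∀ s ∈ V2, s < x → s ∈ Set.Ico (0:ℝ) T → f s ≤ fm x + 1 := by
      by_cases hx0 : 0 < x
      · have h1 := hlm x ⟨hx0, hx.2⟩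
        have h2 : ∀ᶠ s in 𝓝[<] x, f s < fm x + 1 :=
          h1.eventually (Filter.Tendsto.eventually_lt_const (by linarith) tendsto_id)
        rw [eventually_nhdsWithin_iff] at h2
        obtain ⟨V2, hV2n, hV2⟩ := h2.exists_mem
        exact ⟨V2, hV2n, fun s hs hsx _ => (hV2 s hs hsx).le⟩
      · refine ⟨Set.univ, univ_mem, fun s _ hsx hs => absurd (lt_of_le_of_lt hs.1 hsx) ?_⟩
        exact not_lt.mpr (not_lt.mp hx0)
    obtain ⟨V2, hV2n, hV2⟩ := hV2
    refine ⟨max (f x + 1) (fm x + 1), V1 ∩ V2, inter_mem hV1n hV2n, fun s hs => ?_⟩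
    rcases le_or_gt x s with hxs | hsx
    · exact le_max_of_le_left (hV1 s hs.1.1 hxs hs.2)
    · exact le_max_of_le_right (hV2 s hs.1.2 hsx hs.2)
  choose! Mx Ux hUx hbx using claim
  obtain ⟨tf, htf, hcov⟩ := (isCompact_Icc (a := (0:ℝ)) (b := T)).elim_nhds_subcover Ux
    (fun x hx => hUx x hx)
  have hne : tf.Nonempty := by
    by_contra hemp
    rw [Finset.not_nonempty_iff_eq_empty] at hemp
    have : (0:ℝ) ∈ ⋃ x ∈ tf, Ux x := hcov ⟨le_refl 0, hT.le⟩
    simp [hemp] at this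
  refine ⟨tf.sup' hne Mx, fun t ht => ?_⟩
  have : t ∈ ⋃ x ∈ tf, Ux x := hcov ⟨ht.1, ht.2.le⟩
  simp only [Set.mem_iUnion] at this
  obtain ⟨x, hxtf, htx⟩ := this
  exact le_trans (hbx x (htf x hxtf) t ⟨htx, ht⟩) (Finset.le_sup' Mx hxtf)

lemma gStar_le_leftlim {T : ℝ} (hT : 0 < T) (μ : Measure ℝ) [IsFiniteMeasure μ]
    (hsuppμ : μ (Set.Ioc (0 : ℝ) T)ᶜ = 0) (l : ℝ → ℝ) (hl : Measurable l)
    (f fm : ℝ → ℝ)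
    (hr : ∀ t ∈ Set.Ico (0:ℝ) T, ContinuousWithinAt f (Set.Ici t) t)
    (hlm : ∀ t ∈ Set.Ioc (0:ℝ) T, Tendsto f (𝓝[<] t) (𝓝 (fm t)))
    (hae : ∀ᵐ t ∂μ, t ∈ Set.Ioc (0:ℝ) T → l t ≤ fm t) :
    ∀ t ∈ Set.Ioc (0:ℝ) T, gStar μ l t ≤ ((fm t : ℝ) : EReal) := by
  obtain ⟨M, hM1, hM2⟩ := bddAbove_cadlag hT f fm hr hlm
  have haeT : ∀ᵐ s ∂μ, s ∈ Set.Ioc (0:ℝ) T := by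
    rw [ae_iff]
    exact hsuppμ
  intro t ht
  apply EReal.le_coe_of_forall_add
  intro ε hε
  -- left-limit control near t
  have h2 : ∀ᶠ s in 𝓝[<] t, f s < fm t + ε / 2 :=
    (hlm t ht).eventually (Filter.Tendsto.eventually_lt_const (by linarith) tendsto_id)
  obtain ⟨l', hl't, hIoo⟩ :=
    mem_nhdsLT_iff_exists_Ioo_subset.mp h2
  set a := max l' 0 with ha_def
  have ha0 : 0 ≤ a := le_max_right _ _
  have hat : a < t := max_lt hl't ht.1
  have hfm_near : ∀ s ∈ Set.Ioc a t, fm s ≤ fm t + ε := by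
    intro s hs
    rcases eq_or_lt_of_le hs.2 with h | h
    · subst h; linarith
    · have hs_mem : s ∈ Set.Ioc (0:ℝ) T :=
        ⟨lt_of_le_of_lt ha0 hs.1, le_trans h.le ht.2⟩
      have : fm s ≤ fm t + ε / 2 := by
        refine le_of_tendsto (hlm s hs_mem) ?_
        have hmem : Set.Ioo a s ∈ 𝓝[<] s := Ioo_mem_nhdsLT_of_mem ⟨hs.1, le_refl s⟩
        filter_upwards [hmem] with u hu
        exact (hIoo ⟨lt_of_le_of_lt (le_max_left l' 0) hu.1, hu.2.trans h⟩).le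
      linarith
  obtain ⟨n, hn⟩ := exists_nat_ge ((M - (fm t + ε)) / (t - a))
  have hn' : M - (fm t + ε) ≤ (n : ℝ) * (t - a) := by
    rw [div_le_iff₀ (by linarith)] at hn
    linarith
  set α := fm t + ε + (n : ℝ) * t with hα_def
  have hαA : α ∈ Aset μ l n t := by
    rw [mem_Aset_iff hl]
    have h1 : ∀ᵐ s ∂μ.restrict (Set.Ioc (0:ℝ) t), s ∈ Set.Ioc (0:ℝ) t :=
      ae_restrict_mem measurableSet_Ioc
    have h2 : ∀ᵐ s ∂μ.restrict (Set.Ioc (0:ℝ) t), (s ∈ Set.Ioc (0:ℝ) T → l s ≤ fm s)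
        ∧ s ∈ Set.Ioc (0:ℝ) T :=
      ae_restrict_of_ae (hae.and haeT)
    filter_upwards [h1, h2] with s hs1 hs2
    have hlfm : l s ≤ fm s := hs2.1 hs2.2
    rcases le_or_gt s a with hsa | has
    · have : fm s ≤ M := hM2 s hs2.2
      have hns : (n:ℝ) * s ≤ (n:ℝ) * a := by
        apply mul_le_mul_of_nonneg_left hsa (Nat.cast_nonneg n)
      have : M + (n:ℝ) * a ≤ fm t + ε + (n:ℝ) * t := by nlinarith [hn']
      nlinarith
    · have : fm s ≤ fm t + ε := hfm_near s ⟨has, hs1.2⟩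
      have hns : (n:ℝ) * s ≤ (n:ℝ) * t := by
        apply mul_le_mul_of_nonneg_left hs1.2 (Nat.cast_nonneg n)
      nlinarith
  have hFn : FnE μ l n t ≤ ((α : ℝ) : EReal) :=
    sInf_le ⟨α, hαA, rfl⟩
  calc gStar μ l t ≤ gnProc μ l n t := iInf_le _ n
    _ = ((-((n : ℝ) * t) : ℝ) : EReal) + FnE μ l n t := gnProc_eq μ l n t
    _ ≤ ((-((n : ℝ) * t) : ℝ) : EReal) + ((α : ℝ) : EReal) := by
        exact add_le_add le_rfl hFn
    _ = ((fm t + ε : ℝ) : EReal) := by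
        rw [← EReal.coe_add]
        norm_num [hα_def]

lemma ae_le_gStar {T : ℝ} (μ : Measure ℝ) [IsFiniteMeasure μ]
    (l : ℝ → ℝ) (hl : Measurable l) :
    ∀ᵐ t ∂μ, t ∈ Set.Ioc (0:ℝ) T → ((l t : ℝ) : EReal) ≤ gStar μ l t := by
  classical
  set B : ℕ → ℚ → Set ℝ := fun n q =>
    {t | t ∈ Set.Ioc (0:ℝ) T ∧ ((q : ℝ) ∈ Aset μ l n t) ∧ (q : ℝ) < l t + (n : ℝ) * t}
    with hB_def
  have hBnull : ∀ n q, μ (B n q) = 0 := by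
    intro n q
    by_cases hne : (B n q).Nonempty
    · have hbdd : BddAbove (B n q) := ⟨T, fun t ht => ht.1.2⟩
      have key : ∀ t ∈ B n q, μ (B n q ∩ Set.Ioc 0 t) = 0 := by
        intro t ht
        have hq := (mem_Aset_iff hl).mp ht.2.1
        set S : Set ℝ := {s | (q:ℝ) < l s + (n:ℝ) * s} with hS_def
        have hS : MeasurableSet S :=
          measurableSet_lt measurable_const (hl.add (measurable_id.const_mul _))
        have hnull : μ (S ∩ Set.Ioc 0 t) = 0 := by
          have h0 := ae_iff.mp hq
          have h0' : (μ.restrict (Set.Ioc 0 t)) S = 0 := by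
            convert h0 using 2
            ext s; simp [hS_def, not_le]
          rwa [Measure.restrict_apply hS] at h0'
        refine measure_mono_null (fun s hs => ?_) hnull
        exact ⟨hs.1.2.2, hs.2⟩
      set s' := sSup (B n q) with hs'_def
      by_cases hmem : s' ∈ B n q
      · refine measure_mono_null (fun t ht => ?_) (key s' hmem)
        exact ⟨ht, ht.1.1, le_csSup hbdd ht⟩
      · obtain ⟨u, hu_mono, hu_tendsto, hu_mem⟩ := exists_seq_tendsto_sSup hne hbdd
        have hcov : B n q ⊆ ⋃ k, (B n q ∩ Set.Ioc 0 (u k)) := by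
          intro t ht
          have htlt : t < s' := lt_of_le_of_ne (le_csSup hbdd ht) (fun h => hmem (h ▸ ht))
          have : ∀ᶠ k in atTop, t < u k := hu_tendsto.eventually (eventually_gt_nhds htlt)
          obtain ⟨k, hk⟩ := this.exists
          exact Set.mem_iUnion.mpr ⟨k, ht, ht.1.1, hk.le⟩
        refine measure_mono_null hcov (measure_iUnion_null fun k => key (u k) (hu_mem k))
    · rw [Set.not_nonempty_iff_eq_empty] at hne
      simp [hne]
  have hN : μ (⋃ n, ⋃ q, B n q) = 0 :=
    measure_iUnion_null fun n => measure_iUnion_null fun q => hBnull n q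
  have hae : ∀ᵐ t ∂μ, t ∉ ⋃ n, ⋃ q, B n q := by
    rw [ae_iff]
    refine measure_mono_null (fun t ht => ?_) hN
    simpa using ht
  filter_upwards [hae] with t htN htIoc
  rw [gStar]
  refine le_iInf fun n => ?_
  by_contra hcon
  rw [not_le] at hcon
  rw [gnProc_eq] at hcon
  have hFn_lt : FnE μ l n t < ((l t + (n:ℝ) * t : ℝ) : EReal) := by
    generalize hF : FnE μ l n t = F at hcon ⊢
    induction F using EReal.rec with
    | bot => exact EReal.bot_lt_coe _
    | coe r =>
      rw [← EReal.coe_add] at hcon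
      have : -((n:ℝ) * t) + r < l t := EReal.coe_lt_coe_iff.mp hcon
      exact EReal.coe_lt_coe_iff.mpr (by linarith)
    | top =>
      rw [EReal.coe_add_top] at hcon
      exact absurd hcon (not_top_lt)
  obtain ⟨x, ⟨α, hαA, rfl⟩, hx⟩ := sInf_lt_iff.mp hFn_lt
  have hα_lt : α < l t + (n:ℝ) * t := EReal.coe_lt_coe_iff.mp hx
  obtain ⟨q, hq1, hq2⟩ := exists_rat_btwn hα_lt
  apply htN
  refine Set.mem_iUnion.mpr ⟨n, Set.mem_iUnion.mpr ⟨q, htIoc, Aset_upward hq1.le hαA, hq2⟩⟩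

noncomputable def cellSup (μ : Measure ℝ) (l : ℝ → ℝ) (x y : ℝ) : EReal :=
  sSup (gStar μ l '' Set.Ioc x y)

noncomputable def bval (μ : Measure ℝ) (l : ℝ → ℝ) (m x y : ℝ) : ℝ :=
  if cellSup μ l x y = ⊥ then m - 1 else (cellSup μ l x y).toReal

noncomputable def plQ (Q : Finset ℝ) (t : ℝ) : ℝ :=
  sSup ({q ∈ (Q : Set ℝ) | q < t} ∪ {0})

noncomputable def pGQ (Q : Finset ℝ) (t : ℝ) : ℝ :=
  sSup ({q ∈ (Q : Set ℝ) | q ≤ t} ∪ {0})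

noncomputable def nlQ (T : ℝ) (Q : Finset ℝ) (t : ℝ) : ℝ :=
  sInf ({q ∈ (Q : Set ℝ) | t ≤ q} ∪ {T + 1})

noncomputable def nGQ (T : ℝ) (Q : Finset ℝ) (t : ℝ) : ℝ :=
  sInf ({q ∈ (Q : Set ℝ) | t < q} ∪ {T + 1})

noncomputable def GQ (μ : Measure ℝ) (l : ℝ → ℝ) (m T : ℝ) (Q : Finset ℝ) (t : ℝ) : ℝ :=
  bval μ l m (pGQ Q t) (nGQ T Q t)

noncomputable def GmQ (μ : Measure ℝ) (l : ℝ → ℝ) (m T : ℝ) (Q : Finset ℝ) (t : ℝ) : ℝ :=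
  bval μ l m (plQ Q t) (nlQ T Q t)

section StepLemmas

variable {T : ℝ} {Q : Finset ℝ}

lemma plQ_finite (Q : Finset ℝ) (t : ℝ) : ({q ∈ (Q : Set ℝ) | q < t} ∪ {0}).Finite :=
  (Q.finite_toSet.subset (Set.sep_subset _ _)).union (Set.finite_singleton 0)

lemma pGQ_finite (Q : Finset ℝ) (t : ℝ) : ({q ∈ (Q : Set ℝ) | q ≤ t} ∪ {0}).Finite :=
  (Q.finite_toSet.subset (Set.sep_subset _ _)).union (Set.finite_singleton 0)

lemma nlQ_finite (T : ℝ) (Q : Finset ℝ) (t : ℝ) :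
    ({q ∈ (Q : Set ℝ) | t ≤ q} ∪ {T + 1}).Finite :=
  (Q.finite_toSet.subset (Set.sep_subset _ _)).union (Set.finite_singleton _)

lemma nGQ_finite (T : ℝ) (Q : Finset ℝ) (t : ℝ) :
    ({q ∈ (Q : Set ℝ) | t < q} ∪ {T + 1}).Finite :=
  (Q.finite_toSet.subset (Set.sep_subset _ _)).union (Set.finite_singleton _)

lemma plQ_mem (Q : Finset ℝ) (t : ℝ) : plQ Q t ∈ ({q ∈ (Q : Set ℝ) | q < t} ∪ {0}) :=
  Set.Nonempty.csSup_mem ⟨0, Or.inr rfl⟩ (plQ_finite Q t)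

lemma plQ_lt {t : ℝ} (ht : 0 < t) : plQ Q t < t := by
  rcases plQ_mem Q t with h | h
  · exact h.2
  · rw [Set.mem_singleton_iff] at h; rw [plQ]; rw [plQ] at h; rw [h]; exact ht

lemma plQ_nonneg (hQ : (Q : Set ℝ) ⊆ Set.Icc 0 T) (t : ℝ) : 0 ≤ plQ Q t := by
  rcases plQ_mem Q t with h | h
  · exact (hQ h.1).1
  · rw [Set.mem_singleton_iff] at h; rw [h]

lemma le_plQ {q t : ℝ} (hq : q ∈ Q) (hqt : q < t) : q ≤ plQ Q t :=
  le_csSup (plQ_finite Q t).bddAbove (Or.inl ⟨hq, hqt⟩)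

lemma pGQ_mem (Q : Finset ℝ) (t : ℝ) : pGQ Q t ∈ ({q ∈ (Q : Set ℝ) | q ≤ t} ∪ {0}) :=
  Set.Nonempty.csSup_mem ⟨0, Or.inr rfl⟩ (pGQ_finite Q t)

lemma le_pGQ {q t : ℝ} (hq : q ∈ Q) (hqt : q ≤ t) : q ≤ pGQ Q t :=
  le_csSup (pGQ_finite Q t).bddAbove (Or.inl ⟨hq, hqt⟩)

lemma nlQ_mem (T : ℝ) (Q : Finset ℝ) (t : ℝ) :
    nlQ T Q t ∈ ({q ∈ (Q : Set ℝ) | t ≤ q} ∪ {T + 1}) :=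
  Set.Nonempty.csInf_mem ⟨T + 1, Or.inr rfl⟩ (nlQ_finite T Q t)

lemma le_nlQ {t : ℝ} (ht : t ≤ T + 1) : t ≤ nlQ T Q t := by
  rcases nlQ_mem T Q t with h | h
  · exact h.2
  · rw [Set.mem_singleton_iff] at h; rw [h]; exact ht

lemma nlQ_le {q t : ℝ} (hq : q ∈ Q) (hqt : t ≤ q) : nlQ T Q t ≤ q :=
  csInf_le (nlQ_finite T Q t).bddBelow (Or.inl ⟨hq, hqt⟩)

lemma nlQ_le_T (hTQ : T ∈ Q) {t : ℝ} (ht : t ≤ T) : nlQ T Q t ≤ T :=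
  nlQ_le hTQ ht

lemma nGQ_mem (T : ℝ) (Q : Finset ℝ) (t : ℝ) :
    nGQ T Q t ∈ ({q ∈ (Q : Set ℝ) | t < q} ∪ {T + 1}) :=
  Set.Nonempty.csInf_mem ⟨T + 1, Or.inr rfl⟩ (nGQ_finite T Q t)

lemma lt_nGQ {t : ℝ} (ht : t < T + 1) : t < nGQ T Q t := by
  rcases nGQ_mem T Q t with h | h
  · exact h.2
  · rw [Set.mem_singleton_iff] at h; rw [h]; exact ht

lemma nGQ_le {q t : ℝ} (hq : q ∈ Q) (hqt : t < q) : nGQ T Q t ≤ q :=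
  csInf_le (nGQ_finite T Q t).bddBelow (Or.inl ⟨hq, hqt⟩)

lemma nlQ_eq_self {t : ℝ} (htQ : t ∈ Q) (ht : t ≤ T + 1) : nlQ T Q t = t :=
  le_antisymm (nlQ_le htQ (le_refl t)) (le_nlQ ht)

/-- On `[t, nGQ t)` the step function `GQ` is constant. -/
lemma GQ_const_right (μ : Measure ℝ) (l : ℝ → ℝ) (m : ℝ) {t s : ℝ}
    (hs : s ∈ Set.Ico t (nGQ T Q t)) : GQ μ l m T Q s = GQ μ l m T Q t := by
  have hpG : pGQ Q s = pGQ Q t := by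
    rw [pGQ, pGQ]
    congr 1
    ext q
    simp only [Set.mem_union, Set.mem_singleton_iff, Set.mem_sep_iff]
    constructor
    · rintro (⟨hq, hqs⟩ | h)
      · refine Or.inl ⟨hq, ?_⟩
        by_contra hqt
        push_neg at hqt
        exact absurd (lt_of_le_of_lt hqs hs.2) (not_lt.mpr (nGQ_le hq hqt))
      · exact Or.inr h
    · rintro (⟨hq, hqt⟩ | h)
      · exact Or.inl ⟨hq, hqt.trans hs.1⟩
      · exact Or.inr h
  have hnG : nGQ T Q s = nGQ T Q t := by
    rw [nGQ, nGQ]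
    congr 1
    ext q
    simp only [Set.mem_union, Set.mem_singleton_iff, Set.mem_sep_iff]
    constructor
    · rintro (⟨hq, hqs⟩ | h)
      · exact Or.inl ⟨hq, lt_of_le_of_lt hs.1 hqs⟩
      · exact Or.inr h
    · rintro (⟨hq, hqt⟩ | h)
      · exact Or.inl ⟨hq, lt_of_lt_of_le hs.2 (nGQ_le hq hqt)⟩
      · exact Or.inr h
  rw [GQ, GQ, hpG, hnG]

/-- On `(plQ t, t)` the step function `GQ` is constant equal to `GmQ t`. -/
lemma GQ_const_left (μ : Measure ℝ) (l : ℝ → ℝ) (m : ℝ) {t s : ℝ}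
    (hs : s ∈ Set.Ioo (plQ Q t) t) : GQ μ l m T Q s = GmQ μ l m T Q t := by
  have hpG : pGQ Q s = plQ Q t := by
    rw [pGQ, plQ]
    congr 1
    ext q
    simp only [Set.mem_union, Set.mem_singleton_iff, Set.mem_sep_iff]
    constructor
    · rintro (⟨hq, hqs⟩ | h)
      · exact Or.inl ⟨hq, lt_of_le_of_lt hqs hs.2⟩
      · exact Or.inr h
    · rintro (⟨hq, hqt⟩ | h)
      · exact Or.inl ⟨hq, (le_plQ hq hqt).trans hs.1.le⟩
      · exact Or.inr h
  have hnG : nGQ T Q s = nlQ T Q t := by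
    rw [nGQ, nlQ]
    congr 1
    ext q
    simp only [Set.mem_union, Set.mem_singleton_iff, Set.mem_sep_iff]
    constructor
    · rintro (⟨hq, hqs⟩ | h)
      · refine Or.inl ⟨hq, ?_⟩
        by_contra hqt
        push_neg at hqt
        exact absurd (lt_of_le_of_lt (le_plQ hq hqt) hs.1) (not_lt.mpr hqs.le)
      · exact Or.inr h
    · rintro (⟨hq, hqt⟩ | h)
      · exact Or.inl ⟨hq, lt_of_lt_of_le hs.2 hqt⟩
      · exact Or.inr h
  rw [GQ, GmQ, hpG, hnG]

lemma GQ_cwa (μ : Measure ℝ) (l : ℝ → ℝ) (m : ℝ) (hT : 0 < T) :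
    ∀ t ∈ Set.Ico (0:ℝ) T, ContinuousWithinAt (GQ μ l m T Q) (Set.Ici t) t := by
  intro t ht
  have hlt : t < nGQ T Q t := lt_nGQ (by linarith [ht.2])
  have hmem : Set.Ico t (nGQ T Q t) ∈ 𝓝[Set.Ici t] t :=
    Ico_mem_nhdsGE hlt
  have heq : (GQ μ l m T Q) =ᶠ[𝓝[Set.Ici t] t] (fun _ => GQ μ l m T Q t) := by
    filter_upwards [hmem] with s hs
    exact GQ_const_right μ l m hs
  exact (continuousWithinAt_const).congr_of_eventuallyEq heq
    (GQ_const_right μ l m ⟨le_refl t, hlt⟩)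

lemma GQ_leftlim (μ : Measure ℝ) (l : ℝ → ℝ) (m : ℝ) :
    ∀ t ∈ Set.Ioc (0:ℝ) T, Tendsto (GQ μ l m T Q) (𝓝[<] t) (𝓝 (GmQ μ l m T Q t)) := by
  intro t ht
  have hmem : Set.Ioo (plQ Q t) t ∈ 𝓝[<] t :=
    Ioo_mem_nhdsLT_of_mem ⟨plQ_lt ht.1, le_refl t⟩
  refine Tendsto.congr' ?_ tendsto_const_nhds
  filter_upwards [hmem] with s hs
  exact (GQ_const_left μ l m hs).symm

lemma gStar_le_GmQ (μ : Measure ℝ) (l : ℝ → ℝ) (m M : ℝ)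
    (hQ : (Q : Set ℝ) ⊆ Set.Icc 0 T) (hTQ : T ∈ Q)
    (hub : ∀ s ∈ Set.Ioc (0:ℝ) T, gStar μ l s ≤ ((M : ℝ) : EReal)) :
    ∀ t ∈ Set.Ioc (0:ℝ) T, gStar μ l t ≤ ((GmQ μ l m T Q t : ℝ) : EReal) := by
  intro t ht
  have htC : t ∈ Set.Ioc (plQ Q t) (nlQ T Q t) :=
    ⟨plQ_lt ht.1, le_nlQ (by linarith [ht.2])⟩
  have hCsub : Set.Ioc (plQ Q t) (nlQ T Q t) ⊆ Set.Ioc (0:ℝ) T := by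
    intro s hs
    exact ⟨lt_of_le_of_lt (plQ_nonneg hQ t) hs.1, hs.2.trans (nlQ_le_T hTQ ht.2)⟩
  have hle : gStar μ l t ≤ cellSup μ l (plQ Q t) (nlQ T Q t) :=
    le_sSup ⟨t, htC, rfl⟩
  rw [GmQ, bval]
  by_cases hbot : cellSup μ l (plQ Q t) (nlQ T Q t) = ⊥
  · rw [if_pos hbot]
    rw [hbot] at hle
    exact le_trans hle bot_le
  · rw [if_neg hbot]
    have hub' : cellSup μ l (plQ Q t) (nlQ T Q t) ≤ ((M : ℝ) : EReal) := by
      refine sSup_le ?_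
      rintro x ⟨s, hsC, rfl⟩
      exact hub s (hCsub hsC)
    have hnetop : cellSup μ l (plQ Q t) (nlQ T Q t) ≠ ⊤ :=
      fun h => by rw [h] at hub'; exact absurd hub' (by simp)
    rw [EReal.coe_toReal hnetop hbot]
    exact hle

end StepLemmas

noncomputable def Qpart (g : ℕ → ℝ) (T : ℝ) (k : ℕ) : Finset ℝ :=
  (Finset.image (fun j : ℕ => T * j / 2 ^ k) (Finset.range (2 ^ k + 1))) ∪
    ((Finset.image g (Finset.range (k + 1))).filter (fun x => x ∈ Set.Icc (0:ℝ) T)) ∪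
    {0, T}

section QpartLemmas

variable {g : ℕ → ℝ} {T : ℝ}

lemma Qpart_mem_iff {k : ℕ} {x : ℝ} : x ∈ Qpart g T k ↔
    (∃ j : ℕ, j ≤ 2 ^ k ∧ x = T * j / 2 ^ k) ∨
    ((∃ i : ℕ, i ≤ k ∧ g i = x) ∧ x ∈ Set.Icc (0:ℝ) T) ∨ x = 0 ∨ x = T := by
  simp only [Qpart, Finset.mem_union, Finset.mem_image, Finset.mem_filter,
    Finset.mem_range, Finset.mem_insert, Finset.mem_singleton]
  constructor
  · rintro ((⟨j, hj, rfl⟩ | ⟨⟨i, hi, rfl⟩, hx⟩) | (rfl | rfl))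
    · exact Or.inl ⟨j, by omega, rfl⟩
    · exact Or.inr (Or.inl ⟨⟨i, by omega, rfl⟩, hx⟩)
    · exact Or.inr (Or.inr (Or.inl rfl))
    · exact Or.inr (Or.inr (Or.inr rfl))
  · rintro (⟨j, hj, rfl⟩ | ⟨⟨i, hi, rfl⟩, hx⟩ | rfl | rfl)
    · exact Or.inl (Or.inl ⟨j, by omega, rfl⟩)
    · exact Or.inl (Or.inr ⟨⟨i, by omega, rfl⟩, hx⟩)
    · exact Or.inr (Or.inl rfl)
    · exact Or.inr (Or.inr rfl)

lemma Qpart_zero_mem (k : ℕ) : (0:ℝ) ∈ Qpart g T k :=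
  Qpart_mem_iff.mpr (Or.inr (Or.inr (Or.inl rfl)))

lemma Qpart_T_mem (k : ℕ) : T ∈ Qpart g T k :=
  Qpart_mem_iff.mpr (Or.inr (Or.inr (Or.inr rfl)))

lemma dyadic_mem_Icc (hT : 0 < T) {j k : ℕ} (hj : j ≤ 2 ^ k) :
    T * j / 2 ^ k ∈ Set.Icc (0:ℝ) T := by
  have h2k : (0:ℝ) < 2 ^ k := by positivity
  constructor
  · positivity
  · rw [div_le_iff₀ h2k]
    have hjr : (j : ℝ) ≤ 2 ^ k := by exact_mod_cast hj
    nlinarith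

lemma Qpart_subset (hT : 0 < T) (k : ℕ) : ((Qpart g T k : Finset ℝ) : Set ℝ) ⊆ Set.Icc 0 T := by
  intro x hx
  rw [Finset.mem_coe, Qpart_mem_iff] at hx
  rcases hx with ⟨j, hj, rfl⟩ | ⟨_, hx⟩ | rfl | rfl
  · exact dyadic_mem_Icc hT hj
  · exact hx
  · exact ⟨le_refl 0, hT.le⟩
  · exact ⟨hT.le, le_rfl⟩

lemma Qpart_mono (hT : 0 < T) : Monotone (Qpart g T) := by
  apply monotone_nat_of_le_succ
  intro k x hx
  rw [Qpart_mem_iff] at hx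
  rw [Qpart_mem_iff]
  rcases hx with ⟨j, hj, rfl⟩ | ⟨⟨i, hi, rfl⟩, hx⟩ | rfl | rfl
  · refine Or.inl ⟨2 * j, by omega, ?_⟩
    have h2k : ((2:ℝ)) ^ k ≠ 0 := by positivity
    push_cast
    rw [pow_succ]
    field_simp
  · exact Or.inr (Or.inl ⟨⟨i, by omega, rfl⟩, hx⟩)
  · exact Or.inr (Or.inr (Or.inl rfl))
  · exact Or.inr (Or.inr (Or.inr rfl))

lemma Qpart_mem_of_mem {k k' : ℕ} (hT : 0 < T) (h : k ≤ k') {x : ℝ}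
    (hx : x ∈ Qpart g T k) : x ∈ Qpart g T k' := Qpart_mono hT h hx

lemma Qpart_g_mem {i k : ℕ} (hik : i ≤ k) (hx : g i ∈ Set.Icc (0:ℝ) T) :
    g i ∈ Qpart g T k :=
  Qpart_mem_iff.mpr (Or.inr (Or.inl ⟨⟨i, hik, rfl⟩, hx⟩))

lemma Qpart_dyadic_mem {j k : ℕ} (hj : j ≤ 2 ^ k) : T * j / 2 ^ k ∈ Qpart g T k :=
  Qpart_mem_iff.mpr (Or.inl ⟨j, hj, rfl⟩)

lemma plQ_mesh (hT : 0 < T) {t : ℝ} (ht : t ∈ Set.Ioc 0 T) (k : ℕ) :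
    t - T / 2 ^ k ≤ plQ (Qpart g T k) t := by
  have h2k : (0:ℝ) < 2 ^ k := by positivity
  set n2 : ℕ := 2 ^ k with hn2_def
  have hn2r : ((n2 : ℕ) : ℝ) = 2 ^ k := by rw [hn2_def]; push_cast; ring
  set x : ℝ := t * 2 ^ k / T with hx_def
  have hx_pos : 0 < x := by
    rw [hx_def]
    exact div_pos (mul_pos ht.1 h2k) hT
  have hx_le : x ≤ (n2 : ℝ) := by
    rw [hx_def, hn2r, div_le_iff₀ hT]
    nlinarith [ht.2]
  have hceil_pos : 1 ≤ ⌈x⌉ := Int.ceil_pos.mpr hx_pos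
  have hceil_le : ⌈x⌉ ≤ (n2 : ℤ) := Int.ceil_le.mpr (by exact_mod_cast hx_le)
  set j : ℕ := (⌈x⌉ - 1).toNat with hj_def
  have hjz_cast : (j : ℤ) = ⌈x⌉ - 1 := Int.toNat_of_nonneg (by omega)
  have hj_real : (j : ℝ) = (⌈x⌉ : ℝ) - 1 := by
    have h := congrArg (fun z : ℤ => (z : ℝ)) hjz_cast
    push_cast at h
    exact h
  have hj_le : j ≤ 2 ^ k := by
    rw [← hn2_def]
    omega
  have hTx : T * x = t * 2 ^ k := by
    rw [hx_def]
    field_simp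
  have h1 : x - 1 ≤ (j : ℝ) := by
    rw [hj_real]
    have := Int.le_ceil x
    linarith
  have hq_lt : T * j / 2 ^ k < t := by
    rw [div_lt_iff₀ h2k]
    have h2 : (j : ℝ) < x := by
      rw [hj_real]
      have := Int.ceil_lt_add_one x
      linarith
    nlinarith [mul_lt_mul_of_pos_left h2 hT]
  have hq_ge : t - T / 2 ^ k ≤ T * j / 2 ^ k := by
    rw [le_div_iff₀ h2k]
    have h3 : (t - T / 2 ^ k) * 2 ^ k = t * 2 ^ k - T := by
      field_simp
    rw [h3]
    nlinarith [mul_le_mul_of_nonneg_left h1 hT.le]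
  exact le_trans hq_ge (le_plQ (Qpart_dyadic_mem hj_le) hq_lt)

lemma nlQ_mesh (hT : 0 < T) {t : ℝ} (ht : t ∈ Set.Ioc 0 T) (k : ℕ) :
    nlQ T (Qpart g T k) t ≤ t + T / 2 ^ k := by
  have h2k : (0:ℝ) < 2 ^ k := by positivity
  set n2 : ℕ := 2 ^ k with hn2_def
  have hn2r : ((n2 : ℕ) : ℝ) = 2 ^ k := by rw [hn2_def]; push_cast; ring
  set x : ℝ := t * 2 ^ k / T with hx_def
  have hx_pos : 0 < x := by
    rw [hx_def]
    exact div_pos (mul_pos ht.1 h2k) hT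
  have hx_le : x ≤ (n2 : ℝ) := by
    rw [hx_def, hn2r, div_le_iff₀ hT]
    nlinarith [ht.2]
  have hceil_pos : 1 ≤ ⌈x⌉ := Int.ceil_pos.mpr hx_pos
  have hceil_le : ⌈x⌉ ≤ (n2 : ℤ) := Int.ceil_le.mpr (by exact_mod_cast hx_le)
  set j : ℕ := (⌈x⌉).toNat with hj_def
  have hjz_cast : (j : ℤ) = ⌈x⌉ := Int.toNat_of_nonneg (by omega)
  have hj_real : (j : ℝ) = (⌈x⌉ : ℝ) := by
    have h := congrArg (fun z : ℤ => (z : ℝ)) hjz_cast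
    push_cast at h
    exact h
  have hj_le : j ≤ 2 ^ k := by
    rw [← hn2_def]
    omega
  have hTx : T * x = t * 2 ^ k := by
    rw [hx_def]
    field_simp
  have hq_ge : t ≤ T * j / 2 ^ k := by
    rw [le_div_iff₀ h2k]
    have h1 : x ≤ (j : ℝ) := by rw [hj_real]; exact Int.le_ceil x
    nlinarith [mul_le_mul_of_nonneg_left h1 hT.le]
  have hq_le : T * j / 2 ^ k ≤ t + T / 2 ^ k := by
    rw [div_le_iff₀ h2k]
    have h1 : (j : ℝ) ≤ x + 1 := by
      rw [hj_real]
      have := Int.ceil_lt_add_one x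
      linarith
    have h5 : (t + T / 2 ^ k) * 2 ^ k = t * 2 ^ k + T := by
      field_simp
    rw [h5]
    nlinarith [mul_le_mul_of_nonneg_left h1 hT.le]
  exact le_trans (nlQ_le (Qpart_dyadic_mem hj_le) hq_ge) hq_le

end QpartLemmas

lemma meas_rc {T : ℝ} (f : ℝ → ℝ)
    (hr : ∀ t ∈ Set.Ico (0:ℝ) T, ContinuousWithinAt f (Set.Ici t) t) :
    Measurable (fun t => if t ∈ Set.Ico (0:ℝ) T then f t else 0) := by
  have hmeas : ∀ m : ℕ, Measurable (fun t : ℝ =>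
      if t ∈ Set.Ico (0:ℝ) T then f (((⌊t * 2 ^ m⌋ + 1 : ℤ) : ℝ) / 2 ^ m) else 0) := by
    intro m
    refine Measurable.ite measurableSet_Ico ?_ measurable_const
    have h1 : Measurable fun t : ℝ => (⌊t * 2 ^ m⌋ : ℤ) :=
      Int.measurable_floor.comp (measurable_id.mul_const _)
    exact (measurable_of_countable (fun k : ℤ => f (((k + 1 : ℤ) : ℝ) / 2 ^ m))).comp h1
  apply measurable_of_tendsto_metrizable hmeas
  rw [tendsto_pi_nhds]
  intro t
  by_cases ht : t ∈ Set.Ico (0:ℝ) T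
  · simp only [if_pos ht]
    have h2m : ∀ m : ℕ, (0:ℝ) < 2 ^ m := fun m => by positivity
    have hgt : ∀ m : ℕ, t ≤ ((⌊t * 2 ^ m⌋ + 1 : ℤ) : ℝ) / 2 ^ m := by
      intro m
      rw [le_div_iff₀ (h2m m)]
      push_cast
      have := Int.lt_floor_add_one (t * 2 ^ m)
      linarith
    have hlt : ∀ m : ℕ, ((⌊t * 2 ^ m⌋ + 1 : ℤ) : ℝ) / 2 ^ m ≤ t + 1 / 2 ^ m := by
      intro m
      rw [div_le_iff₀ (h2m m)]
      push_cast
      have := Int.floor_le (t * 2 ^ m)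
      have h3 : (t + 1 / 2 ^ m) * 2 ^ m = t * 2 ^ m + 1 := by field_simp
      rw [h3]
      linarith
    have htends : Tendsto (fun m : ℕ => ((⌊t * 2 ^ m⌋ + 1 : ℤ) : ℝ) / 2 ^ m) atTop (𝓝 t) := by
      have hub : Tendsto (fun m : ℕ => t + 1 / 2 ^ m) atTop (𝓝 t) := by
        have h0 : Tendsto (fun m : ℕ => (1:ℝ) / 2 ^ m) atTop (𝓝 0) := by
          have := tendsto_pow_atTop_nhds_zero_of_lt_one (by norm_num : (0:ℝ) ≤ 1/2)
            (by norm_num : (1:ℝ)/2 < 1)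
          convert this using 2 with m
          rw [div_pow, one_pow]
        have := tendsto_const_nhds (x := t) (f := atTop (α := ℕ)) |>.add h0
        simpa using this
      exact tendsto_of_tendsto_of_tendsto_of_le_of_le tendsto_const_nhds hub hgt hlt
    have hwithin : Tendsto (fun m : ℕ => ((⌊t * 2 ^ m⌋ + 1 : ℤ) : ℝ) / 2 ^ m) atTop
        (𝓝[Set.Ici t] t) :=
      tendsto_nhdsWithin_of_tendsto_nhds_of_eventually_within _ htends
        (Eventually.of_forall fun m => hgt m)
    exact (hr t ht).tendsto.comp hwithin
  · simp only [if_neg ht]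
    exact tendsto_const_nhds

lemma meas_leftlim {T : ℝ} (f fm : ℝ → ℝ)
    (h1 : Measurable (fun t => if t ∈ Set.Ico (0:ℝ) T then f t else 0))
    (hlm : ∀ t ∈ Set.Ioc (0:ℝ) T, Tendsto f (𝓝[<] t) (𝓝 (fm t))) :
    Measurable (fun t => if t ∈ Set.Ioc (0:ℝ) T then fm t else 0) := by
  set F : ℝ → ℝ := fun t => if t ∈ Set.Ico (0:ℝ) T then f t else 0 with hF_def
  have hmeas : ∀ m : ℕ, Measurable
      (fun t => if t ∈ Set.Ioc (0:ℝ) T then F (t - 1/(m+1)) else 0) := fun m =>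
    Measurable.ite measurableSet_Ioc (h1.comp (measurable_id.sub_const _)) measurable_const
  apply measurable_of_tendsto_metrizable hmeas
  rw [tendsto_pi_nhds]
  intro t
  by_cases ht : t ∈ Set.Ioc (0:ℝ) T
  · simp only [if_pos ht]
    have hpos : ∀ m : ℕ, (0:ℝ) < 1/(m+1) := fun m => by positivity
    have hseq : Tendsto (fun m : ℕ => t - 1/(m+1)) atTop (𝓝 t) := by
      have h0 : Tendsto (fun m : ℕ => (1:ℝ)/(m+1)) atTop (𝓝 0) :=
        tendsto_one_div_add_atTop_nhds_zero_nat
      have := tendsto_const_nhds (x := t) (f := atTop (α := ℕ)) |>.sub h0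
      simpa using this
    have hwithin : Tendsto (fun m : ℕ => t - 1/(m+1)) atTop (𝓝[<] t) :=
      tendsto_nhdsWithin_of_tendsto_nhds_of_eventually_within _ hseq
        (Eventually.of_forall fun m => by
          simp only [Set.mem_Iio]
          linarith [hpos m])
    have hcomp : Tendsto (fun m : ℕ => f (t - 1/(m+1))) atTop (𝓝 (fm t)) :=
      (hlm t ht).comp hwithin
    refine Tendsto.congr' ?_ hcomp
    have hev : ∀ᶠ m : ℕ in atTop, 1/((m:ℝ)+1) < t := by
      have h0 : Tendsto (fun m : ℕ => (1:ℝ)/(m+1)) atTop (𝓝 0) :=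
        tendsto_one_div_add_atTop_nhds_zero_nat
      exact h0.eventually (eventually_lt_nhds ht.1)
    filter_upwards [hev] with m hm
    have hmem : t - 1/(m+1) ∈ Set.Ico (0:ℝ) T := by
      constructor
      · linarith
      · linarith [hpos m, ht.2]
    rw [hF_def]
    simp only [if_pos hmem]
  · simp only [if_neg ht]
    exact tendsto_const_nhds

lemma plQ_monotone (Q : Finset ℝ) : Monotone (plQ Q) := by
  intro t t' htt'
  apply csSup_le_csSup (plQ_finite Q t').bddAbove ⟨0, Or.inr rfl⟩
  rintro q (⟨hq, hqt⟩ | h)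
  · exact Or.inl ⟨hq, lt_of_lt_of_le hqt htt'⟩
  · exact Or.inr h

lemma nlQ_monotone (T : ℝ) (Q : Finset ℝ) : Monotone (nlQ T Q) := by
  intro t t' htt'
  apply csInf_le_csInf (nlQ_finite T Q t).bddBelow ⟨T+1, Or.inr rfl⟩
  rintro q (⟨hq, hqt⟩ | h)
  · exact Or.inl ⟨hq, le_trans htt' hqt⟩
  · exact Or.inr h

lemma GmQ_measurable (μ : Measure ℝ) (l : ℝ → ℝ) (m T : ℝ) (Q : Finset ℝ) :
    Measurable (GmQ μ l m T Q) := by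
  have hpair : Measurable (fun t => (plQ Q t, nlQ T Q t)) :=
    ((plQ_monotone Q).measurable).prodMk ((nlQ_monotone T Q).measurable)
  have hrange : (Set.range (fun t => (plQ Q t, nlQ T Q t))).Countable := by
    have hsub : Set.range (fun t => (plQ Q t, nlQ T Q t)) ⊆
        ((Q : Set ℝ) ∪ {0}) ×ˢ ((Q : Set ℝ) ∪ {T+1}) := by
      rintro p ⟨t, rfl⟩
      constructor
      · rcases plQ_mem Q t with h | h
        · exact Or.inl h.1
        · exact Or.inr h
      · rcases nlQ_mem T Q t with h | h
        · exact Or.inl h.1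
        · exact Or.inr h
    exact Set.Countable.mono hsub
      ((Q.countable_toSet.union (Set.countable_singleton 0)).prod
        (Q.countable_toSet.union (Set.countable_singleton (T+1))))
  exact measurable_comp_countable_range hpair hrange (fun p : ℝ × ℝ => bval μ l m p.1 p.2)

lemma bval_lt_of_cellSup_lt {μ : Measure ℝ} {l : ℝ → ℝ} {m x y c : ℝ}
    (hck : cellSup μ l x y < (c : EReal)) (hmc : m - 1 < c) : bval μ l m x y < c := by
  rw [bval]
  by_cases hbot : cellSup μ l x y = ⊥
  · rw [if_pos hbot]; exact hmc
  · rw [if_neg hbot]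
    have hne : cellSup μ l x y ≠ ⊤ := ne_top_of_lt hck
    have := EReal.coe_toReal hne hbot
    rw [← this] at hck
    exact EReal.coe_lt_coe_iff.mp hck

lemma tendsto_Tdiv2pow (T : ℝ) : Tendsto (fun k : ℕ => T / 2 ^ k) atTop (𝓝 0) := by
  have h0 : Tendsto (fun k : ℕ => (1:ℝ) / 2 ^ k) atTop (𝓝 0) := by
    have := tendsto_pow_atTop_nhds_zero_of_lt_one (by norm_num : (0:ℝ) ≤ 1/2)
      (by norm_num : (1:ℝ)/2 < 1)
    convert this using 2 with m
    rw [div_pow, one_pow]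
  have h1 := h0.const_mul T
  simp only [mul_zero] at h1
  convert h1 using 2 with k
  rw [mul_one_div]

lemma exists_cell_lt {T : ℝ} (hT : 0 < T) (μ : Measure ℝ) (l : ℝ → ℝ) (m : ℝ) (g : ℕ → ℝ)
    (hg : ∀ n : ℕ, {x | ¬ContinuousAt (FnE μ l n) x} ⊆ Set.range g)
    {t : ℝ} (ht : t ∈ Set.Ioc 0 T) {c : ℝ}
    (hlt : gStar μ l t < (c : EReal)) (hmc : m - 1 < c) :
    ∃ k : ℕ, GmQ μ l m T (Qpart g T k) t < c := by
  obtain ⟨n, hn⟩ : ∃ n : ℕ, gnProc μ l n t < (c : EReal) := by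
    rw [gStar] at hlt
    exact iInf_lt_iff.mp hlt
  have hbk_ge : ∀ k : ℕ, t ≤ nlQ T (Qpart g T k) t :=
    fun k => le_nlQ (by linarith [ht.2])
  have hbk_le : ∀ k : ℕ, nlQ T (Qpart g T k) t ≤ t + T / 2 ^ k :=
    fun k => nlQ_mesh hT ht k
  have hak_ge : ∀ k : ℕ, t - T / 2 ^ k ≤ plQ (Qpart g T k) t :=
    fun k => plQ_mesh hT ht k
  have hak_lt : ∀ k : ℕ, plQ (Qpart g T k) t < t := fun k => plQ_lt ht.1
  have hak_nonneg : ∀ k : ℕ, 0 ≤ plQ (Qpart g T k) t :=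
    fun k => plQ_nonneg (Qpart_subset hT k) t
  -- convergence of FnE along the right endpoints
  have hFtends : Tendsto (fun k => FnE μ l n (nlQ T (Qpart g T k) t)) atTop
      (𝓝 (FnE μ l n t)) := by
    by_cases hQ : ∃ k0, t ∈ Qpart g T k0
    · obtain ⟨k0, hk0⟩ := hQ
      refine Tendsto.congr' ?_ (tendsto_const_nhds (x := FnE μ l n t))
      filter_upwards [eventually_ge_atTop k0] with k hk
      rw [nlQ_eq_self (Qpart_mem_of_mem hT hk hk0) (by linarith [ht.2])]
    · have hcont : ContinuousAt (FnE μ l n) t := by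
        by_contra hnc
        obtain ⟨i, hi⟩ := hg n hnc
        refine hQ ⟨i, ?_⟩
        have hIcc : g i ∈ Set.Icc (0:ℝ) T := by rw [hi]; exact ⟨ht.1.le, ht.2⟩
        have hmem := Qpart_g_mem (le_refl i) hIcc
        rwa [hi] at hmem
      have hb_tendsto : Tendsto (fun k => nlQ T (Qpart g T k) t) atTop (𝓝 t) := by
        refine tendsto_of_tendsto_of_tendsto_of_le_of_le tendsto_const_nhds ?_ hbk_ge hbk_le
        have := (tendsto_const_nhds (x := t) (f := atTop (α := ℕ))).add (tendsto_Tdiv2pow T)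
        simpa using this
      exact (hcont.tendsto).comp hb_tendsto
  -- uniform cell bound
  have hcell : ∀ k : ℕ, cellSup μ l (plQ (Qpart g T k) t) (nlQ T (Qpart g T k) t) ≤
      ((-((n:ℝ) * plQ (Qpart g T k) t) : ℝ) : EReal) + FnE μ l n (nlQ T (Qpart g T k) t) := by
    intro k
    apply sSup_le
    rintro x ⟨s, hs, rfl⟩
    calc gStar μ l s ≤ gnProc μ l n s := iInf_le _ n
      _ = ((-((n:ℝ) * s) : ℝ) : EReal) + FnE μ l n s := gnProc_eq μ l n s
      _ ≤ ((-((n:ℝ) * plQ (Qpart g T k) t) : ℝ) : EReal) + FnE μ l n (nlQ T (Qpart g T k) t) := by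
          apply add_le_add
          · rw [EReal.coe_le_coe_iff]
            have : (n:ℝ) * plQ (Qpart g T k) t ≤ (n:ℝ) * s :=
              mul_le_mul_of_nonneg_left hs.1.le (Nat.cast_nonneg n)
            linarith
          · exact FnE_mono hs.2
  -- find a good k
  have hck : ∃ k : ℕ, cellSup μ l (plQ (Qpart g T k) t) (nlQ T (Qpart g T k) t) < (c : EReal) := by
    by_cases hFtop : FnE μ l n t = ⊤
    · exfalso
      rw [gnProc_eq, hFtop, EReal.coe_add_top] at hn
      exact not_top_lt hn
    by_cases hFbot : FnE μ l n t = ⊥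
    · rw [hFbot] at hFtends
      have hmemb : ∀ᶠ y in 𝓝 (⊥ : EReal), y < (c : EReal) := by
        filter_upwards [isOpen_Iio.mem_nhds (EReal.bot_lt_coe c)] with x hx using hx
      have hev : ∀ᶠ k : ℕ in atTop, FnE μ l n (nlQ T (Qpart g T k) t) < (c : EReal) :=
        hFtends.eventually hmemb
      obtain ⟨k, hk⟩ := hev.exists
      refine ⟨k, lt_of_le_of_lt (le_trans (hcell k) ?_) hk⟩
      have h1 : ((-((n:ℝ) * plQ (Qpart g T k) t) : ℝ) : EReal) ≤ ((0:ℝ) : EReal) := by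
        rw [EReal.coe_le_coe_iff]
        have := mul_nonneg (Nat.cast_nonneg (α := ℝ) n) (hak_nonneg k)
        linarith
      calc ((-((n:ℝ) * plQ (Qpart g T k) t) : ℝ) : EReal) + FnE μ l n (nlQ T (Qpart g T k) t)
          ≤ ((0:ℝ) : EReal) + FnE μ l n (nlQ T (Qpart g T k) t) := add_le_add h1 le_rfl
        _ = FnE μ l n (nlQ T (Qpart g T k) t) := by
            norm_num
    · obtain ⟨r, hr⟩ : ∃ r : ℝ, FnE μ l n t = (r : EReal) :=
        ⟨(FnE μ l n t).toReal, (EReal.coe_toReal hFtop hFbot).symm⟩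
      have hrc : -((n:ℝ) * t) + r < c := by
        rw [gnProc_eq, hr, ← EReal.coe_add] at hn
        exact EReal.coe_lt_coe_iff.mp hn
      set η : ℝ := (c - (-((n:ℝ) * t) + r)) / 3 with hη_def
      have hη : 0 < η := by rw [hη_def]; linarith
      have hev1 : ∀ᶠ k : ℕ in atTop,
          FnE μ l n (nlQ T (Qpart g T k) t) < ((r + η : ℝ) : EReal) := by
        rw [hr] at hFtends
        have hmemr : ∀ᶠ y in 𝓝 ((r : ℝ) : EReal), y < ((r + η : ℝ) : EReal) := by
          have hmem : ((r:ℝ) : EReal) ∈ Set.Iio ((r + η : ℝ) : EReal) := by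
            rw [Set.mem_Iio, EReal.coe_lt_coe_iff]
            linarith
          filter_upwards [isOpen_Iio.mem_nhds hmem] with x hx using hx
        exact hFtends.eventually hmemr
      have hev2 : ∀ᶠ k : ℕ in atTop, (n:ℝ) * (T / 2 ^ k) < η := by
        have h1 := (tendsto_Tdiv2pow T).const_mul (n:ℝ)
        simp only [mul_zero] at h1
        exact h1.eventually (eventually_lt_nhds hη)
      obtain ⟨k, hk1, hk2⟩ := (hev1.and hev2).exists
      refine ⟨k, ?_⟩
      have hb1 : cellSup μ l (plQ (Qpart g T k) t) (nlQ T (Qpart g T k) t) ≤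
          ((-((n:ℝ) * plQ (Qpart g T k) t) : ℝ) : EReal) + ((r + η : ℝ) : EReal) :=
        le_trans (hcell k) (add_le_add le_rfl hk1.le)
      have hb2 : ((-((n:ℝ) * plQ (Qpart g T k) t) : ℝ) : EReal) + ((r + η : ℝ) : EReal)
          < (c : EReal) := by
        rw [← EReal.coe_add, EReal.coe_lt_coe_iff]
        have h4 := mul_le_mul_of_nonneg_left (hak_ge k) (Nat.cast_nonneg (α := ℝ) n)
        have h3 : -((n:ℝ) * plQ (Qpart g T k) t) ≤ -((n:ℝ) * t) + (n:ℝ) * (T / 2 ^ k) := by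
          nlinarith [h4]
        linarith [h3, hk2]
      exact lt_of_le_of_lt hb1 hb2
  obtain ⟨k, hk⟩ := hck
  exact ⟨k, bval_lt_of_cellSup_lt hk hmc⟩


lemma EReal.coe_sub_nonpos_of_le {r : ℝ} {y : EReal} (h : (r : EReal) ≤ y) :
    (r : EReal) - y ≤ 0 := by
  induction y using EReal.rec with
  | bot => exact absurd h (by simp)
  | coe s =>
    rw [← EReal.coe_sub]
    have : r ≤ s := EReal.coe_le_coe_iff.mp h
    exact_mod_cast EReal.coe_le_coe_iff.mpr (by linarith : r - s ≤ (0:ℝ))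
  | top =>
    rw [EReal.sub_top]
    exact bot_le


/-- Let `L, Y : [0,T] → ℝ` be càdlàg (left limits `Lm, Ym`) with `L ≤ Y` on `[0,T)`,
`μ, κ` finite Borel measures on `(0,T]`, `l` Borel measurable with `l(t) ≤ Y(t−)` μ-a.e.
Then: (for every càdlàg `L*` with `L ≤ L* ≤ Y` on `[0,T)` and `l(t) ≤ L*(t−)` μ-a.e., one
has `∫_{(0,T]} (Y(t−) − L*(t−)) dκ = 0`) if and only if
`∫_{(0,T]} (Y(t−) − max(L(t−), l^{*,μ}(t))) dκ = 0`, the (nonnegative) integrand in the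
latter formed with the max in `ℝ ∪ {−∞}`. -/
theorem stmt_15 (T : ℝ) (hT : 0 < T)
    (μ κ : Measure ℝ) [IsFiniteMeasure μ] [IsFiniteMeasure κ]
    (hsuppμ : μ (Set.Ioc (0 : ℝ) T)ᶜ = 0) (hsuppκ : κ (Set.Ioc (0 : ℝ) T)ᶜ = 0)
    (l : ℝ → ℝ) (hl : Measurable l)
    (L Y Lm Ym : ℝ → ℝ)
    (hLr : ∀ t ∈ Set.Ico (0 : ℝ) T, ContinuousWithinAt L (Set.Ici t) t)
    (hYr : ∀ t ∈ Set.Ico (0 : ℝ) T, ContinuousWithinAt Y (Set.Ici t) t)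
    (hLl : ∀ t ∈ Set.Ioc (0 : ℝ) T, Tendsto L (𝓝[<] t) (𝓝 (Lm t)))
    (hYl : ∀ t ∈ Set.Ioc (0 : ℝ) T, Tendsto Y (𝓝[<] t) (𝓝 (Ym t)))
    (hLY : ∀ t ∈ Set.Ico (0 : ℝ) T, L t ≤ Y t)
    (hlY : ∀ᵐ t ∂μ, t ∈ Set.Ioc (0 : ℝ) T → l t ≤ Ym t) :
    ((∀ Ls Lsm : ℝ → ℝ,
        (∀ t ∈ Set.Ico (0 : ℝ) T, ContinuousWithinAt Ls (Set.Ici t) t) →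
        (∀ t ∈ Set.Ioc (0 : ℝ) T, Tendsto Ls (𝓝[<] t) (𝓝 (Lsm t))) →
        (∀ t ∈ Set.Ico (0 : ℝ) T, L t ≤ Ls t ∧ Ls t ≤ Y t) →
        (∀ᵐ t ∂μ, t ∈ Set.Ioc (0 : ℝ) T → l t ≤ Lsm t) →
        ∫⁻ t in Set.Ioc (0 : ℝ) T, ENNReal.ofReal (Ym t - Lsm t) ∂κ = 0) ↔
      ∫⁻ t in Set.Ioc (0 : ℝ) T,
        erealToENNReal (((Ym t : ℝ) : EReal) - max ((Lm t : ℝ) : EReal) (gStar μ l t)) ∂κ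
        = 0) := by
  obtain ⟨MY, hMY1, hMY2⟩ := bddAbove_cadlag hT Y Ym hYr hYl
  obtain ⟨MN, hMN1, hMN2⟩ := bddAbove_cadlag hT (fun t => -Y t) (fun t => -Ym t)
      (fun t ht => (hYr t ht).neg) (fun t ht => (hYl t ht).neg)
  have hYm_lb : ∀ t ∈ Set.Ioc (0:ℝ) T, -MN ≤ Ym t := by
    intro t ht
    have := hMN2 t ht
    linarith
  have hgY : ∀ t ∈ Set.Ioc (0:ℝ) T, gStar μ l t ≤ ((Ym t : ℝ) : EReal) :=
    gStar_le_leftlim hT μ hsuppμ l hl Y Ym hYr hYl hlY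
  have hub : ∀ s ∈ Set.Ioc (0:ℝ) T, gStar μ l s ≤ ((MY : ℝ) : EReal) := fun s hs =>
    le_trans (hgY s hs) (EReal.coe_le_coe_iff.mpr (hMY2 s hs))
  constructor
  · -- forward direction
    intro ha
    set m : ℝ := -MN with hm_def
    have hDc : (⋃ n : ℕ, {x | ¬ContinuousAt (FnE μ l n) x}).Countable :=
      Set.countable_iUnion fun n =>
        (FnE_mono (μ := μ) (l := l) (n := n)).countable_not_continuousAt
    obtain ⟨g, hgeq⟩ := (hDc.insert 0).exists_eq_range (Set.insert_nonempty _ _)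
    have hgn : ∀ n : ℕ, {x | ¬ContinuousAt (FnE μ l n) x} ⊆ Set.range g := by
      intro n x hx
      rw [← hgeq]
      exact Set.mem_insert_of_mem _ (Set.mem_iUnion.mpr ⟨n, hx⟩)
    have hadm : ∀ k : ℕ, ∫⁻ t in Set.Ioc (0:ℝ) T, ENNReal.ofReal
        (Ym t - max (Lm t) (min (Ym t) (GmQ μ l m T (Qpart g T k) t))) ∂κ = 0 := by
      intro k
      apply ha (fun t => max (L t) (min (Y t) (GQ μ l m T (Qpart g T k) t)))
          (fun t => max (Lm t) (min (Ym t) (GmQ μ l m T (Qpart g T k) t)))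
      · intro t ht
        exact (hLr t ht).max ((hYr t ht).min (GQ_cwa μ l m hT t ht))
      · intro t ht
        exact (hLl t ht).max ((hYl t ht).min (GQ_leftlim μ l m t ht))
      · intro t ht
        exact ⟨le_max_left _ _, max_le (hLY t ht) (min_le_left _ _)⟩
      · have h1 := ae_le_gStar (T := T) μ l hl
        filter_upwards [hlY, h1] with t htY htg htIoc
        refine le_max_of_le_right (le_min (htY htIoc) ?_)
        have h2 : ((l t : ℝ) : EReal) ≤ ((GmQ μ l m T (Qpart g T k) t : ℝ) : EReal) :=
          le_trans (htg htIoc)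
            (gStar_le_GmQ (T := T) (Q := Qpart g T k) μ l m MY
              (Qpart_subset (g := g) hT k) (Qpart_T_mem (g := g) (T := T) k) hub t htIoc)
        exact EReal.coe_le_coe_iff.mp h2
    have hae_k : ∀ k : ℕ, ∀ᵐ t ∂κ.restrict (Set.Ioc (0:ℝ) T),
        Ym t ≤ max (Lm t) (min (Ym t) (GmQ μ l m T (Qpart g T k) t)) := by
      intro k
      set Ym' : ℝ → ℝ := fun t => if t ∈ Set.Ioc (0:ℝ) T then Ym t else 0 with hYm'
      set Lm' : ℝ → ℝ := fun t => if t ∈ Set.Ioc (0:ℝ) T then Lm t else 0 with hLm'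
      have hYm'meas : Measurable Ym' := meas_leftlim Y Ym (meas_rc Y hYr) hYl
      have hLm'meas : Measurable Lm' := meas_leftlim L Lm (meas_rc L hLr) hLl
      have hFkmeas : Measurable (fun t => ENNReal.ofReal
          (Ym' t - max (Lm' t) (min (Ym' t) (GmQ μ l m T (Qpart g T k) t)))) :=
        ((hYm'meas.sub ((hLm'meas.max (hYm'meas.min
          (GmQ_measurable μ l m T (Qpart g T k))))))).ennreal_ofReal
      have heq : ∀ᵐ t ∂κ.restrict (Set.Ioc (0:ℝ) T),
          ENNReal.ofReal (Ym t - max (Lm t) (min (Ym t) (GmQ μ l m T (Qpart g T k) t))) =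
          ENNReal.ofReal (Ym' t - max (Lm' t) (min (Ym' t) (GmQ μ l m T (Qpart g T k) t))) := by
        filter_upwards [ae_restrict_mem measurableSet_Ioc] with t ht2
        rw [hYm', hLm']
        simp only [if_pos ht2]
      have h0 : ∫⁻ t in Set.Ioc (0:ℝ) T, ENNReal.ofReal
          (Ym' t - max (Lm' t) (min (Ym' t) (GmQ μ l m T (Qpart g T k) t))) ∂κ = 0 := by
        rw [← lintegral_congr_ae heq]
        exact hadm k
      have hz := (lintegral_eq_zero_iff hFkmeas).mp h0
      filter_upwards [hz, ae_restrict_mem measurableSet_Ioc] with t ht1 ht2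
      have ht1' : ENNReal.ofReal
          (Ym' t - max (Lm' t) (min (Ym' t) (GmQ μ l m T (Qpart g T k) t))) = 0 := ht1
      have ht1'' := ENNReal.ofReal_eq_zero.mp ht1'
      rw [hYm', hLm'] at ht1''
      simp only [if_pos ht2] at ht1''
      linarith [ht1'']
    have hae_all : ∀ᵐ t ∂κ.restrict (Set.Ioc (0:ℝ) T), ∀ k : ℕ,
        Ym t ≤ max (Lm t) (min (Ym t) (GmQ μ l m T (Qpart g T k) t)) :=
      ae_all_iff.mpr hae_k
    have hfinal : (fun t => erealToENNReal
        (((Ym t : ℝ) : EReal) - max ((Lm t : ℝ) : EReal) (gStar μ l t)))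
        =ᵐ[κ.restrict (Set.Ioc (0:ℝ) T)] (fun _ => (0 : ENNReal)) := by
      filter_upwards [hae_all, ae_restrict_mem measurableSet_Ioc] with t hk htIoc
      rw [erealToENNReal_eq_zero]
      have hYm_le : ((Ym t : ℝ) : EReal) ≤ max ((Lm t : ℝ) : EReal) (gStar μ l t) := by
        by_contra hcon
        rw [not_le] at hcon
        have hLm_lt : Lm t < Ym t :=
          EReal.coe_lt_coe_iff.mp (lt_of_le_of_lt (le_max_left _ _) hcon)
        have hg_lt : gStar μ l t < ((Ym t : ℝ) : EReal) :=
          lt_of_le_of_lt (le_max_right _ _) hcon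
        have hm_le : m - 1 < Ym t := by
          rw [hm_def]
          linarith [hYm_lb t htIoc]
        obtain ⟨k, hk'⟩ := exists_cell_lt hT μ l m g hgn htIoc hg_lt hm_le
        have h5 := hk k
        have h6 : max (Lm t) (min (Ym t) (GmQ μ l m T (Qpart g T k) t)) < Ym t :=
          max_lt hLm_lt (lt_of_le_of_lt (min_le_right _ _) hk')
        linarith
      exact EReal.coe_sub_nonpos_of_le hYm_le
    rw [lintegral_congr_ae hfinal, lintegral_zero]
  · -- backward direction
    intro hb Ls Lsm hLsr hLsl hLs_between hlLsm
    have hLsm_ge_Lm : ∀ t ∈ Set.Ioc (0:ℝ) T, Lm t ≤ Lsm t := by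
      intro t ht
      refine le_of_tendsto_of_tendsto (hLl t ht) (hLsl t ht) ?_
      have hmem : Set.Ioo (0:ℝ) t ∈ 𝓝[<] t := Ioo_mem_nhdsLT_of_mem ⟨ht.1, le_refl t⟩
      filter_upwards [hmem] with s hs
      exact (hLs_between s ⟨hs.1.le, lt_of_lt_of_le hs.2 ht.2⟩).1
    have hLsm_ge_g : ∀ t ∈ Set.Ioc (0:ℝ) T, gStar μ l t ≤ ((Lsm t : ℝ) : EReal) :=
      gStar_le_leftlim hT μ hsuppμ l hl Ls Lsm hLsr hLsl hlLsm
    refine le_antisymm ?_ (by simp)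
    rw [← hb]
    apply lintegral_mono_ae
    filter_upwards [ae_restrict_mem measurableSet_Ioc] with t ht
    rw [← erealToENNReal_coe]
    apply erealToENNReal_mono
    rw [EReal.coe_sub]
    apply EReal.sub_le_sub (le_refl _)
    exact max_le (EReal.coe_le_coe_iff.mpr (hLsm_ge_Lm t ht)) (hLsm_ge_g t ht)
end
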